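/- Let I = (0,a) for some a ∈ (0,∞], and let M be a weighted mean on I that is Jensen concave (i.e. M((x+y)/2, λ) ≥ (M(x,λ)+M(y,λ))/2 in each finite dimension). Define M_#(x,λ) := liminf_{t→0⁺} M(tx,λ)/t for positive vectors x. Then for every weight sequence λ and every positive sequence (x_n), if ∑_n λ_n M((x_1,...,x_n),(λ_1,...,λ_n)) ≤ C ∑_n λ_n x_n holds for all admissible sequences, then also ∑_n λ_n M_#((x_1,...,x_n),(λ_1,...,λ_n)) ≤ C ∑_n λ_n x_n holds for all positive sequences; consequently the λ-Hardy constant of M_# is at most that of M, with equality when M is Jensen concave (since then M ≤ M_#). -/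

import Mathlib

open Filter
open scoped ENNReal Topology

namespace Stmt19Aux

lemma mem_of_le {a : ℝ≥0∞} {I : Set ℝ}
    (hI : I = {x : ℝ | 0 < x ∧ ENNReal.ofReal x < a})
    {y z : ℝ} (hy : y ∈ I) (hz : 0 < z) (hzy : z ≤ y) : z ∈ I := by
  subst hI
  exact ⟨hz, lt_of_le_of_lt (ENNReal.ofReal_le_ofReal hzy) hy.2⟩

lemma exists_small {a : ℝ≥0∞} {I : Set ℝ} (ha : 0 < a)
    (hI : I = {x : ℝ | 0 < x ∧ ENNReal.ofReal x < a}) :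
    ∃ b : ℝ, 0 < b ∧ ∀ z : ℝ, 0 < z → z ≤ b → z ∈ I := by
  by_cases hat : a = ⊤
  · exact ⟨1, one_pos, fun z hz _ => by rw [hI]; exact ⟨hz, by simp [hat]⟩⟩
  · have hta : 0 < a.toReal := ENNReal.toReal_pos ha.ne' hat
    refine ⟨a.toReal / 2, by positivity, fun z hz hzb => ?_⟩
    rw [hI]
    refine ⟨hz, ?_⟩
    have : ENNReal.ofReal z < ENNReal.ofReal a.toReal := by
      rw [ENNReal.ofReal_lt_ofReal_iff hta]
      linarith
    rwa [ENNReal.ofReal_toReal hat] at this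

lemma comb_mem {a : ℝ≥0∞} {I : Set ℝ}
    (hI : I = {x : ℝ | 0 < x ∧ ENNReal.ofReal x < a})
    {u v l : ℝ} (hu : u ∈ I) (hv : v ∈ I) (hl0 : 0 ≤ l) (hl1 : l ≤ 1) :
    (1 - l) * u + l * v ∈ I := by
  have hu0 : 0 < u := by rw [hI] at hu; exact hu.1
  have hv0 : 0 < v := by rw [hI] at hv; exact hv.1
  rcases le_total u v with h | h
  · exact mem_of_le hI hv (by nlinarith) (by nlinarith)
  · exact mem_of_le hI hu (by nlinarith) (by nlinarith)

lemma ev_smul_mem {a : ℝ≥0∞} {I : Set ℝ} (ha : 0 < a)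
    (hI : I = {x : ℝ | 0 < x ∧ ENNReal.ofReal x < a})
    {c : ℝ} (hc : 0 < c) : ∀ᶠ t in 𝓝[>] (0:ℝ), t * c ∈ I := by
  obtain ⟨b, hb0, hb⟩ := exists_small ha hI
  filter_upwards [Ioo_mem_nhdsGT_of_mem ⟨le_refl 0, div_pos hb0 hc⟩] with t ht
  exact hb _ (mul_pos ht.1 hc) ((le_div_iff₀ hc).mp ht.2.le)

section M

variable (M : ∀ n : ℕ, (Fin (n + 1) → ℝ) → (Fin (n + 1) → ℝ) → ℝ)

lemma M_ge {I : Set ℝ}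
    (hmean : ∀ (n : ℕ) (x v : Fin (n + 1) → ℝ), (∀ i, x i ∈ I) →
      (∀ i, 0 ≤ v i) → 0 < ∑ i, v i →
      (⨅ i, x i) ≤ M n x v ∧ M n x v ≤ ⨆ i, x i)
    {n : ℕ} {x v : Fin (n+1) → ℝ} (hx : ∀ i, x i ∈ I)
    (hv : ∀ i, 0 ≤ v i) (hvs : 0 < ∑ i, v i)
    {c : ℝ} (hc : ∀ i, c ≤ x i) : c ≤ M n x v :=
  le_trans (le_ciInf hc) (hmean n x v hx hv hvs).1

lemma M_le {I : Set ℝ}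
    (hmean : ∀ (n : ℕ) (x v : Fin (n + 1) → ℝ), (∀ i, x i ∈ I) →
      (∀ i, 0 ≤ v i) → 0 < ∑ i, v i →
      (⨅ i, x i) ≤ M n x v ∧ M n x v ≤ ⨆ i, x i)
    {n : ℕ} {x v : Fin (n+1) → ℝ} (hx : ∀ i, x i ∈ I)
    (hv : ∀ i, 0 ≤ v i) (hvs : 0 < ∑ i, v i)
    {c : ℝ} (hc : ∀ i, x i ≤ c) : M n x v ≤ c :=
  le_trans (hmean n x v hx hv hvs).2 (ciSup_le hc)

lemma dyadic {a : ℝ≥0∞} {I : Set ℝ}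
    (hI : I = {x : ℝ | 0 < x ∧ ENNReal.ofReal x < a})
    (hconc : ∀ (n : ℕ) (x y v : Fin (n + 1) → ℝ), (∀ i, x i ∈ I) → (∀ i, y i ∈ I) →
      (∀ i, 0 ≤ v i) → 0 < ∑ i, v i →
      (M n x v + M n y v) / 2 ≤ M n (fun i => (x i + y i) / 2) v)
    {n : ℕ} {v : Fin (n+1) → ℝ} (hv : ∀ i, 0 ≤ v i) (hvs : 0 < ∑ i, v i) :
    ∀ (m k : ℕ), k ≤ 2 ^ m → ∀ u x : Fin (n+1) → ℝ, (∀ i, u i ∈ I) → (∀ i, x i ∈ I) →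
      (1 - (k:ℝ)/2^m) * M n u v + ((k:ℝ)/2^m) * M n x v
        ≤ M n (fun i => (1 - (k:ℝ)/2^m) * u i + ((k:ℝ)/2^m) * x i) v := by
  intro m
  induction m with
  | zero =>
    intro k hk u x hu hx
    interval_cases k
    · norm_num
    · norm_num
  | succ m ih =>
    intro k hk u x hu hx
    have h2 : (0:ℝ) < 2 ^ m := by positivity
    have hpownat : 2 ^ (m + 1) = 2 ^ m * 2 := pow_succ 2 m
    set k1 := k / 2 with hk1
    set k2 := k - k / 2 with hk2
    have hks : k1 + k2 = k := by omega
    have h1le : k1 ≤ 2 ^ m := by omega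
    have h2le : k2 ≤ 2 ^ m := by omega
    have hcast : (k1:ℝ) + (k2:ℝ) = (k:ℝ) := by exact_mod_cast hks
    have hpow : (2:ℝ) ^ (m+1) = 2 ^ m * 2 := pow_succ 2 m
    have hlam : (k1:ℝ)/2^m + (k2:ℝ)/2^m = 2 * ((k:ℝ)/2^(m+1)) := by
      rw [← add_div, hcast, hpow]
      field_simp
    have hl10 : (0:ℝ) ≤ (k1:ℝ)/2^m := by positivity
    have hl11 : (k1:ℝ)/2^m ≤ 1 := by
      rw [div_le_one h2]; exact_mod_cast h1le
    have hl20 : (0:ℝ) ≤ (k2:ℝ)/2^m := by positivity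
    have hl21 : (k2:ℝ)/2^m ≤ 1 := by
      rw [div_le_one h2]; exact_mod_cast h2le
    set c1 : Fin (n+1) → ℝ := fun i => (1 - (k1:ℝ)/2^m) * u i + ((k1:ℝ)/2^m) * x i with hc1
    set c2 : Fin (n+1) → ℝ := fun i => (1 - (k2:ℝ)/2^m) * u i + ((k2:ℝ)/2^m) * x i with hc2
    have hc1I : ∀ i, c1 i ∈ I := fun i => comb_mem hI (hu i) (hx i) hl10 hl11
    have hc2I : ∀ i, c2 i ∈ I := fun i => comb_mem hI (hu i) (hx i) hl20 hl21
    have IH1 := ih k1 h1le u x hu hx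
    have IH2 := ih k2 h2le u x hu hx
    have hmid := hconc n c1 c2 v hc1I hc2I hv hvs
    have heq : (fun i => (c1 i + c2 i) / 2)
        = (fun i => (1 - (k:ℝ)/2^(m+1)) * u i + ((k:ℝ)/2^(m+1)) * x i) := by
      funext i
      simp only [hc1, hc2]
      linear_combination ((x i - u i) / 2) * hlam
    rw [heq] at hmid
    have : (1 - (k:ℝ)/2^(m+1)) * M n u v + ((k:ℝ)/2^(m+1)) * M n x v
        = ((1 - (k1:ℝ)/2^m) * M n u v + ((k1:ℝ)/2^m) * M n x v
          + ((1 - (k2:ℝ)/2^m) * M n u v + ((k2:ℝ)/2^m) * M n x v)) / 2 := by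
      linear_combination ((M n u v - M n x v) / 2) * hlam
    rw [this]
    calc ((1 - (k1:ℝ)/2^m) * M n u v + ((k1:ℝ)/2^m) * M n x v
          + ((1 - (k2:ℝ)/2^m) * M n u v + ((k2:ℝ)/2^m) * M n x v)) / 2
        ≤ (M n c1 v + M n c2 v) / 2 := by linarith
      _ ≤ _ := hmid

lemma ev_bounds {a : ℝ≥0∞} {I : Set ℝ} (ha : 0 < a)
    (hI : I = {x : ℝ | 0 < x ∧ ENNReal.ofReal x < a})
    (hmean : ∀ (n : ℕ) (x v : Fin (n + 1) → ℝ), (∀ i, x i ∈ I) →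
      (∀ i, 0 ≤ v i) → 0 < ∑ i, v i →
      (⨅ i, x i) ≤ M n x v ∧ M n x v ≤ ⨆ i, x i)
    {n : ℕ} {x v : Fin (n+1) → ℝ}
    (hv : ∀ i, 0 ≤ v i) (hvs : 0 < ∑ i, v i) (hx0 : ∀ i, 0 < x i) :
    ∃ cl cu : ℝ, 0 < cl ∧ ∀ᶠ t in 𝓝[>] (0:ℝ),
      cl ≤ M n (fun i => t * x i) v / t ∧ M n (fun i => t * x i) v / t ≤ cu := by
  obtain ⟨j, hj⟩ := Finite.exists_min x
  obtain ⟨J, hJ⟩ := Finite.exists_max x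
  have hev : ∀ᶠ t in 𝓝[>] (0:ℝ), ∀ i, t * x i ∈ I :=
    eventually_all.mpr fun i => ev_smul_mem ha hI (hx0 i)
  refine ⟨x j, x J, hx0 j, ?_⟩
  filter_upwards [hev, eventually_mem_nhdsWithin] with t htI ht
  have ht0 : (0:ℝ) < t := ht
  constructor
  · rw [le_div_iff₀ ht0]
    have : t * x j ≤ M n (fun i => t * x i) v :=
      M_ge M hmean htI hv hvs fun i => mul_le_mul_of_nonneg_left (hj i) ht0.le
    linarith [this]
  · rw [div_le_iff₀ ht0]
    have : M n (fun i => t * x i) v ≤ t * x J :=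
      M_le M hmean htI hv hvs fun i => mul_le_mul_of_nonneg_left (hJ i) ht0.le
    linarith [this]

set_option maxHeartbeats 1000000 in
lemma M_le_liminf {a : ℝ≥0∞} {I : Set ℝ} (ha : 0 < a)
    (hI : I = {x : ℝ | 0 < x ∧ ENNReal.ofReal x < a})
    (hmean : ∀ (n : ℕ) (x v : Fin (n + 1) → ℝ), (∀ i, x i ∈ I) →
      (∀ i, 0 ≤ v i) → 0 < ∑ i, v i →
      (⨅ i, x i) ≤ M n x v ∧ M n x v ≤ ⨆ i, x i)
    (hconc : ∀ (n : ℕ) (x y v : Fin (n + 1) → ℝ), (∀ i, x i ∈ I) → (∀ i, y i ∈ I) →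
      (∀ i, 0 ≤ v i) → 0 < ∑ i, v i →
      (M n x v + M n y v) / 2 ≤ M n (fun i => (x i + y i) / 2) v)
    {n : ℕ} {x v : Fin (n+1) → ℝ}
    (hv : ∀ i, 0 ≤ v i) (hvs : 0 < ∑ i, v i) (hx : ∀ i, x i ∈ I) :
    M n x v ≤ liminf (fun t : ℝ => M n (fun i => t * x i) v / t) (𝓝[>] (0:ℝ)) := by
  have hx0 : ∀ i, 0 < x i := fun i => by rw [hI] at hx; exact (hx i).1
  obtain ⟨j, hj⟩ := Finite.exists_min x
  have hMpos : 0 < M n x v :=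
    lt_of_lt_of_le (hx0 j) (M_ge M hmean hx hv hvs hj)
  have hIoo : Set.Ioo (0:ℝ) 1 ∈ 𝓝[>] (0:ℝ) :=
    Ioo_mem_nhdsGT_of_mem ⟨le_refl 0, one_pos⟩
  obtain ⟨J, hJ⟩ := Finite.exists_max x
  have hub : ∀ᶠ t in 𝓝[>] (0:ℝ), M n (fun i => t * x i) v / t ≤ x J := by
    filter_upwards [hIoo] with t ht
    have htI : ∀ i, t * x i ∈ I := fun i =>
      mem_of_le hI (hx i) (mul_pos ht.1 (hx0 i)) (by nlinarith [hx0 i, ht.2, (hx0 i).le])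
    rw [div_le_iff₀ ht.1]
    exact le_trans (M_le M hmean htI hv hvs
      (fun i => mul_le_mul_of_nonneg_left (hJ i) ht.1.le)) (le_of_eq (mul_comm _ _))
  have hcb : IsCoboundedUnder (· ≥ ·) (𝓝[>] (0:ℝ))
      (fun t : ℝ => M n (fun i => t * x i) v / t) :=
    (isBoundedUnder_of_eventually_le hub).isCoboundedUnder_ge
  have key : ∀ δ : ℝ, δ ∈ Set.Ioo (0:ℝ) 1 →
      (1 - δ) * M n x v ≤ liminf (fun t : ℝ => M n (fun i => t * x i) v / t) (𝓝[>] (0:ℝ)) := by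
    intro δ hδ
    refine le_liminf_of_le hcb ?_
    filter_upwards [hIoo] with t ht
    obtain ⟨ht0, ht1⟩ := ht
    obtain ⟨m, hm⟩ := exists_pow_lt_of_lt_one (mul_pos hδ.1 ht0) (by norm_num : (1:ℝ)/2 < 1)
    have h2m : (0:ℝ) < 2 ^ m := by positivity
    have hhalf : ((1:ℝ)/2) ^ m = ((2:ℝ) ^ m)⁻¹ := by
      rw [one_div, inv_pow]
    rw [hhalf] at hm
    -- hm : (2^m)⁻¹ < δ * t
    have hmm : 1 < δ * t * 2 ^ m := by
      rw [inv_lt_iff_one_lt_mul₀ h2m] at hm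
      linarith [hm]
    have hpos2 : 0 < t * 2 ^ m := mul_pos ht0 h2m
    have ht2m : 1 < t * 2 ^ m := by
      calc (1:ℝ) < δ * t * 2 ^ m := hmm
        _ = δ * (t * 2 ^ m) := by ring
        _ < 1 * (t * 2 ^ m) := mul_lt_mul_of_pos_right hδ.2 hpos2
        _ = t * 2 ^ m := one_mul _
    set K := ⌈t * 2 ^ m⌉₊ with hK
    have hK1 : 1 < K := Nat.lt_ceil.mpr (by exact_mod_cast ht2m)
    set k := K - 1 with hk
    have hkK : (k:ℝ) = (K:ℝ) - 1 := by
      rw [hk, Nat.cast_sub (by omega)]; norm_num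
    have hkub : (k:ℝ) < t * 2 ^ m := by
      have h := Nat.ceil_lt_add_one (by positivity : (0:ℝ) ≤ t * 2 ^ m)
      rw [hkK]; rw [← hK] at h; linarith
    have hklb : t * 2 ^ m ≤ (k:ℝ) + 1 := by
      have h := Nat.le_ceil (t * 2 ^ m)
      rw [hkK]; rw [← hK] at h; linarith
    have hkpos : (1:ℝ) ≤ (k:ℝ) := by
      have : (1:ℕ) ≤ k := by omega
      exact_mod_cast this
    have hk2m : (k:ℝ) ≤ 2 ^ m := by nlinarith
    have hk2mn : k ≤ 2 ^ m := by exact_mod_cast hk2m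
    set l := (k:ℝ) / 2 ^ m with hl
    have hl0 : 0 < l := by positivity
    have hlt : l < t := by rw [hl, div_lt_iff₀ h2m]; linarith
    have hlget : t * (1 - δ) < l := by
      rw [hl, lt_div_iff₀ h2m]
      nlinarith [hklb, hmm]
    have hlt1 : l < 1 := lt_trans hlt ht1
    set e := (t - l) / (1 - l) with he
    have he0 : 0 < e := div_pos (by linarith) (by linarith)
    have he1 : e ≤ 1 := by rw [he, div_le_one (by linarith)]; linarith
    have hu : ∀ i, e * x i ∈ I := fun i =>
      mem_of_le hI (hx i) (mul_pos he0 (hx0 i)) (by nlinarith [hx0 i, (hx0 i).le])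
    have hdy := dyadic M hI hconc hv hvs m k hk2mn (fun i => e * x i) x hu hx
    rw [← hl] at hdy
    have hcomb : (fun i => (1 - l) * (e * x i) + l * x i) = (fun i => t * x i) := by
      funext i
      have h1l : (1:ℝ) - l ≠ 0 := by linarith
      have hle : (1 - l) * e = t - l := by rw [he]; field_simp
      linear_combination x i * hle
    rw [hcomb] at hdy
    have hMu : 0 ≤ M n (fun i => e * x i) v :=
      M_ge M hmean hu hv hvs fun i => (mul_pos he0 (hx0 i)).le
    have hMt : l * M n x v ≤ M n (fun i => t * x i) v := by nlinarith [hdy, hMu]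
    rw [le_div_iff₀ ht0]
    nlinarith [hMpos.le, hlget, hMt]
  by_contra hcon
  push_neg at hcon
  set L := liminf (fun t : ℝ => M n (fun i => t * x i) v / t) (𝓝[>] (0:ℝ)) with hL
  have h12 := key (1/2) ⟨by norm_num, by norm_num⟩
  have hLpos : 0 < L := lt_of_lt_of_le (by nlinarith [hMpos]) h12
  set δ := (M n x v - L) / (2 * M n x v) with hδdef
  have hδ : δ ∈ Set.Ioo (0:ℝ) 1 :=
    ⟨div_pos (by linarith) (by linarith), by rw [div_lt_one (by linarith)]; linarith⟩
  have hkey := key δ hδ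
  have hgen : ∀ A B : ℝ, 0 < A → (1 - (A - B) / (2 * A)) * A = (A + B) / 2 := by
    intro A B hA
    field_simp
    ring
  rw [hδdef, hgen _ L hMpos] at hkey
  linarith

set_option maxHeartbeats 2000000 in
lemma key {a : ℝ≥0∞} {I : Set ℝ} (ha : 0 < a)
    (hI : I = {x : ℝ | 0 < x ∧ ENNReal.ofReal x < a})
    (hmean : ∀ (n : ℕ) (x v : Fin (n + 1) → ℝ), (∀ i, x i ∈ I) →
      (∀ i, 0 ≤ v i) → 0 < ∑ i, v i →
      (⨅ i, x i) ≤ M n x v ∧ M n x v ≤ ⨆ i, x i)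
    (Ms : ∀ n : ℕ, (Fin (n + 1) → ℝ) → (Fin (n + 1) → ℝ) → ℝ)
    (hMs : ∀ (n : ℕ) (x v : Fin (n + 1) → ℝ), Ms n x v =
      Filter.liminf (fun t : ℝ => M n (fun i => t * x i) v / t)
        (nhdsWithin 0 (Set.Ioi 0)))
    (w : ℕ → ℝ) (hw0 : 0 < w 0) (hw : ∀ n, 0 ≤ w n)
    (C : ℝ≥0∞)
    (hC : ∀ x : ℕ → ℝ, (∀ n, x n ∈ I) →
        (∑' n : ℕ, ENNReal.ofReal (w n *
            M n (fun i => x i.val) (fun i => w i.val))) ≤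
          C * ∑' n : ℕ, ENNReal.ofReal (w n * x n))
    (x : ℕ → ℝ) (hx0 : ∀ n, 0 < x n) :
    (∑' n : ℕ, ENNReal.ofReal (w n *
        Ms n (fun i => x i.val) (fun i => w i.val))) ≤
      C * ∑' n : ℕ, ENNReal.ofReal (w n * x n) := by
  -- weights facts
  have hwv : ∀ (n : ℕ) (i : Fin (n+1)), 0 ≤ w i.val := fun n i => hw _
  have hwsum : ∀ n : ℕ, 0 < ∑ i : Fin (n+1), w i.val := by
    intro n
    have h := Finset.single_le_sum (f := fun i : Fin (n+1) => w i.val)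
      (fun i _ => hw _) (Finset.mem_univ (0 : Fin (n+1)))
    simp only [Fin.val_zero] at h
    linarith
  by_cases hCtop : C = ⊤
  · have h0 : (0:ℝ≥0∞) < ∑' n, ENNReal.ofReal (w n * x n) :=
      lt_of_lt_of_le (ENNReal.ofReal_pos.mpr (mul_pos hw0 (hx0 0))) (ENNReal.le_tsum 0)
    rw [hCtop, ENNReal.top_mul h0.ne']
    exact le_top
  set c := C.toReal with hc
  have hc0 : 0 ≤ c := ENNReal.toReal_nonneg
  -- Ms nonneg
  have hMsb : ∀ n : ℕ, 0 ≤ Ms n (fun i => x i.val) (fun i => w i.val) := by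
    intro n
    rw [hMs]
    obtain ⟨cl, cu, hcl, hev⟩ := ev_bounds M ha hI hmean (hwv n) (hwsum n)
      (fun i : Fin (n+1) => hx0 i.val)
    have hcb : IsCoboundedUnder (· ≥ ·) (𝓝[>] (0:ℝ))
        (fun t : ℝ => M n (fun i => t * x i.val) (fun i => w i.val) / t) :=
      (isBoundedUnder_of_eventually_le (hev.mono fun t h => h.2)).isCoboundedUnder_ge
    exact le_trans hcl.le (le_liminf_of_le hcb (hev.mono fun t h => h.1))
  -- reduce to finite blocks
  rw [ENNReal.tsum_eq_iSup_sum]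
  refine iSup_le fun s => ?_
  obtain ⟨N, hsN⟩ : ∃ N : ℕ, s ⊆ Finset.range (N+1) :=
    ⟨s.sup id, fun i hi => Finset.mem_range.mpr
      (by have := Finset.le_sup (f := id) hi; simp at this; omega)⟩
  refine le_trans (Finset.sum_le_sum_of_subset hsN) ?_
  set P := ∑ n ∈ Finset.range (N+1), w n * x n with hP
  have hP0 : 0 ≤ P := Finset.sum_nonneg fun n _ => mul_nonneg (hw n) (hx0 n).le
  -- real key estimate
  have hreal : ∑ n ∈ Finset.range (N+1), w n * Ms n (fun i => x i.val) (fun i => w i.val)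
      ≤ c * P := by
    refine le_of_forall_pos_le_add fun δ hδ => ?_
    set W := ∑ n ∈ Finset.range (N+1), w n with hW
    have hW0 : 0 ≤ W := Finset.sum_nonneg fun n _ => hw n
    set ε := δ / (2 * (W + 1)) with hε
    have hε0 : 0 < ε := by positivity
    set δ1 := δ / (2 * (c + 1)) with hδ1
    have hδ10 : 0 < δ1 := by positivity
    obtain ⟨b, hb0, hb⟩ := exists_small ha hI
    set z : ℕ → ℝ := fun n => min (δ1 * (1/2)^(n+1) / (w n + 1)) b with hz
    have hz0 : ∀ n, 0 < z n := by
      intro n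
      have hwn1 : (0:ℝ) < w n + 1 := by linarith [hw n]
      exact lt_min (div_pos (mul_pos hδ10 (by positivity)) hwn1) hb0
    have hzb : ∀ n, z n ≤ b := fun n => min_le_right _ _
    have hzw : ∀ n, w n * z n ≤ δ1 * (1/2)^(n+1) := by
      intro n
      have hwn1 : (0:ℝ) < w n + 1 := by linarith [hw n]
      have hA : (0:ℝ) ≤ δ1 * (1/2)^(n+1) := by positivity
      calc w n * z n ≤ w n * (δ1 * (1/2)^(n+1) / (w n + 1)) :=
            mul_le_mul_of_nonneg_left (min_le_left _ _) (hw n)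
        _ ≤ δ1 * (1/2)^(n+1) := by
            rw [mul_div_assoc', div_le_iff₀ hwn1]
            nlinarith [hw n]
    -- pick t
    have hev1 : ∀ᶠ t in 𝓝[>] (0:ℝ), t ∈ Set.Ioo (0:ℝ) 1 :=
      Ioo_mem_nhdsGT_of_mem ⟨le_refl 0, one_pos⟩
    have hev2 : ∀ᶠ t in 𝓝[>] (0:ℝ), ∀ i : Fin (N+1), t * x i.val ∈ I :=
      eventually_all.mpr fun i => ev_smul_mem ha hI (hx0 _)
    have hev3 : ∀ᶠ t in 𝓝[>] (0:ℝ), ∀ nn : Fin (N+1),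
        Ms nn.val (fun i => x i.val) (fun i => w i.val) - ε
          < M nn.val (fun i => t * x i.val) (fun i => w i.val) / t := by
      refine eventually_all.mpr fun nn => ?_
      obtain ⟨cl, cu, hcl, hev⟩ := ev_bounds M ha hI hmean (hwv nn.val) (hwsum nn.val)
        (fun i : Fin (nn.val+1) => hx0 i.val)
      have hbd : IsBoundedUnder (· ≥ ·) (𝓝[>] (0:ℝ))
          (fun t : ℝ => M nn.val (fun i => t * x i.val) (fun i => w i.val) / t) :=
        isBoundedUnder_of_eventually_ge (hev.mono fun t h => h.1)
      have hlt : Ms nn.val (fun i => x i.val) (fun i => w i.val) - ε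
          < liminf (fun t : ℝ => M nn.val (fun i => t * x i.val) (fun i => w i.val) / t)
            (𝓝[>] (0:ℝ)) := by
        rw [hMs]
        exact sub_lt_self _ hε0
      exact eventually_lt_of_lt_liminf hlt hbd
    obtain ⟨t, ht1, ht2, ht3⟩ := (hev1.and (hev2.and hev3)).exists
    obtain ⟨ht0, htl1⟩ := ht1
    -- the test sequence
    set y : ℕ → ℝ := fun n => if n ≤ N then t * x n else t * z n with hy
    have hyI : ∀ n, y n ∈ I := by
      intro n
      by_cases hn : n ≤ N
      · have := ht2 ⟨n, by omega⟩
        simpa [hy, hn] using this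
      · simp only [hy, if_neg hn]
        have hzn := hz0 n
        have htz : t * z n ≤ z n := by nlinarith
        exact hb _ (mul_pos ht0 hzn) (htz.trans (hzb n))
    have hH := hC y hyI
    -- RHS bound
    have hT : (∑' n : ℕ, ENNReal.ofReal (w n * y n)) ≤ ENNReal.ofReal (t * (P + δ1)) := by
      have hsplit : ∀ n : ℕ, ENNReal.ofReal (w n * y n) ≤
          ENNReal.ofReal (if n ≤ N then w n * (t * x n) else 0)
          + ENNReal.ofReal (if n ≤ N then 0 else t * (δ1 * (1/2)^(n+1))) := by
        intro n
        by_cases hn : n ≤ N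
        · simp [hy, hn]
        · simp only [hy, if_neg hn, ENNReal.ofReal_zero, zero_add]
          apply ENNReal.ofReal_le_ofReal
          calc w n * (t * z n) = t * (w n * z n) := by ring
            _ ≤ t * (δ1 * (1/2)^(n+1)) := mul_le_mul_of_nonneg_left (hzw n) ht0.le
      have hA : (∑' n : ℕ, ENNReal.ofReal (if n ≤ N then w n * (t * x n) else 0))
          = ENNReal.ofReal (t * P) := by
        rw [tsum_eq_sum (s := Finset.range (N+1))
          (by intro n hn; simp at hn; rw [if_neg (by omega)]; simp)]
        rw [show ENNReal.ofReal (t * P)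
            = ENNReal.ofReal (∑ n ∈ Finset.range (N+1), w n * (t * x n)) by
          congr 1; rw [hP, Finset.mul_sum]; exact Finset.sum_congr rfl fun n _ => by ring]
        rw [ENNReal.ofReal_sum_of_nonneg
          (fun n _ => mul_nonneg (hw n) (mul_pos ht0 (hx0 n)).le)]
        refine Finset.sum_congr rfl fun n hn => ?_
        simp at hn
        rw [if_pos (by omega)]
      have hB : (∑' n : ℕ, ENNReal.ofReal (if n ≤ N then 0 else t * (δ1 * (1/2)^(n+1))))
          ≤ ENNReal.ofReal (t * δ1) := by
        have hterm : ∀ n : ℕ, ENNReal.ofReal (if n ≤ N then 0 else t * (δ1 * (1/2)^(n+1)))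
            ≤ ENNReal.ofReal (t * δ1) * (ENNReal.ofReal (1/2))^(n+1) := by
          intro n
          by_cases hn : n ≤ N
          · simp [hn]
          · rw [if_neg hn]
            rw [show t * (δ1 * (1/2)^(n+1)) = (t * δ1) * (1/2)^(n+1) by ring]
            rw [ENNReal.ofReal_mul (by positivity), ENNReal.ofReal_pow (by norm_num)]
        refine le_trans (ENNReal.tsum_le_tsum hterm) ?_
        rw [ENNReal.tsum_mul_left]
        have hhalf : ENNReal.ofReal (1/2 : ℝ) = 2⁻¹ := by
          rw [show (1/2 : ℝ) = 2⁻¹ by norm_num, ENNReal.ofReal_inv_of_pos two_pos]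
          norm_num
        rw [hhalf]
        have hgeo : (∑' n : ℕ, (2⁻¹ : ℝ≥0∞)^(n+1)) = 1 := by
          simp_rw [pow_succ']
          rw [ENNReal.tsum_mul_left, ENNReal.tsum_geometric, ENNReal.one_sub_inv_two,
            inv_inv]
          exact ENNReal.inv_mul_cancel two_ne_zero ENNReal.ofNat_ne_top
        rw [hgeo, mul_one]
      calc (∑' n : ℕ, ENNReal.ofReal (w n * y n))
          ≤ ∑' n : ℕ, (ENNReal.ofReal (if n ≤ N then w n * (t * x n) else 0)
              + ENNReal.ofReal (if n ≤ N then 0 else t * (δ1 * (1/2)^(n+1)))) :=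
            ENNReal.tsum_le_tsum hsplit
        _ = (∑' n : ℕ, ENNReal.ofReal (if n ≤ N then w n * (t * x n) else 0))
            + ∑' n : ℕ, ENNReal.ofReal (if n ≤ N then 0 else t * (δ1 * (1/2)^(n+1))) :=
            ENNReal.tsum_add
        _ ≤ ENNReal.ofReal (t * P) + ENNReal.ofReal (t * δ1) := add_le_add hA.le hB
        _ = ENNReal.ofReal (t * (P + δ1)) := by
            rw [← ENNReal.ofReal_add (by positivity) (by positivity)]
            ring_nf
    -- LHS bound
    have hmemI : ∀ n ∈ Finset.range (N+1), ∀ i : Fin (n+1), t * x i.val ∈ I := by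
      intro n hn i
      simp at hn
      exact ht2 ⟨i.val, by omega⟩
    have hMnn : ∀ n ∈ Finset.range (N+1),
        0 ≤ M n (fun i => t * x i.val) (fun i => w i.val) := by
      intro n hn
      exact M_ge M hmean (hmemI n hn) (hwv n) (hwsum n)
        (fun i => (mul_pos ht0 (hx0 i.val)).le)
    have hL : ENNReal.ofReal (∑ n ∈ Finset.range (N+1),
          w n * M n (fun i => t * x i.val) (fun i => w i.val))
        ≤ ∑' n : ℕ, ENNReal.ofReal (w n * M n (fun i => y i.val) (fun i => w i.val)) := by
      rw [ENNReal.ofReal_sum_of_nonneg (fun n hn => mul_nonneg (hw n) (hMnn n hn))]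
      refine le_trans (le_of_eq (Finset.sum_congr rfl fun n hn => ?_)) (ENNReal.sum_le_tsum _)
      have hyx : (fun i : Fin (n+1) => y i.val) = (fun i : Fin (n+1) => t * x i.val) := by
        funext i
        simp at hn
        have : i.val ≤ N := by omega
        simp [hy, this]
      rw [hyx]
    have hchain : ENNReal.ofReal (∑ n ∈ Finset.range (N+1),
          w n * M n (fun i => t * x i.val) (fun i => w i.val))
        ≤ C * ENNReal.ofReal (t * (P + δ1)) :=
      le_trans hL (le_trans hH (mul_le_mul_right hT C))
    have hCre : C * ENNReal.ofReal (t * (P + δ1)) = ENNReal.ofReal (c * (t * (P + δ1))) := by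
      rw [ENNReal.ofReal_mul hc0, ENNReal.ofReal_toReal hCtop]
    rw [hCre] at hchain
    have hreal2 : ∑ n ∈ Finset.range (N+1),
        w n * M n (fun i => t * x i.val) (fun i => w i.val) ≤ c * (t * (P + δ1)) :=
      (ENNReal.ofReal_le_ofReal_iff (by positivity)).mp hchain
    -- put it together
    have hsum : ∑ n ∈ Finset.range (N+1), w n * Ms n (fun i => x i.val) (fun i => w i.val)
        ≤ ∑ n ∈ Finset.range (N+1),
          w n * (M n (fun i => t * x i.val) (fun i => w i.val) / t + ε) := by
      refine Finset.sum_le_sum fun n hn => ?_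
      have hnN : n ≤ N := by simp at hn; omega
      have h3 := ht3 ⟨n, by omega⟩
      exact mul_le_mul_of_nonneg_left (by linarith [h3]) (hw n)
    have hdist : ∑ n ∈ Finset.range (N+1),
          w n * (M n (fun i => t * x i.val) (fun i => w i.val) / t + ε)
        = (∑ n ∈ Finset.range (N+1),
            w n * M n (fun i => t * x i.val) (fun i => w i.val)) / t + ε * W := by
      rw [Finset.sum_div, Finset.mul_sum]
      rw [← Finset.sum_add_distrib]
      refine Finset.sum_congr rfl fun n _ => by ring
    have hdivt : (∑ n ∈ Finset.range (N+1),
          w n * M n (fun i => t * x i.val) (fun i => w i.val)) / t ≤ c * (P + δ1) := by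
      rw [div_le_iff₀ ht0]
      calc _ ≤ c * (t * (P + δ1)) := hreal2
        _ = c * (P + δ1) * t := by ring
    have h1 : c * δ1 ≤ δ / 2 := by
      rw [hδ1, mul_div_assoc', div_le_div_iff₀ (by positivity) (by norm_num : (0:ℝ) < 2)]
      nlinarith
    have h2 : ε * W ≤ δ / 2 := by
      rw [hε, div_mul_eq_mul_div, div_le_div_iff₀ (by positivity) (by norm_num : (0:ℝ) < 2)]
      nlinarith
    calc ∑ n ∈ Finset.range (N+1), w n * Ms n (fun i => x i.val) (fun i => w i.val)
        ≤ (∑ n ∈ Finset.range (N+1),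
            w n * M n (fun i => t * x i.val) (fun i => w i.val)) / t + ε * W := by
          rw [← hdist]; exact hsum
      _ ≤ c * (P + δ1) + ε * W := by linarith [hdivt]
      _ = c * P + (c * δ1 + ε * W) := by ring
      _ ≤ c * P + δ := by linarith
  -- back to ENNReal
  calc ∑ n ∈ Finset.range (N+1),
        ENNReal.ofReal (w n * Ms n (fun i => x i.val) (fun i => w i.val))
      = ENNReal.ofReal (∑ n ∈ Finset.range (N+1),
          w n * Ms n (fun i => x i.val) (fun i => w i.val)) :=
        (ENNReal.ofReal_sum_of_nonneg fun n _ => mul_nonneg (hw n) (hMsb n)).symm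
    _ ≤ ENNReal.ofReal (c * P) := ENNReal.ofReal_le_ofReal hreal
    _ = C * ENNReal.ofReal P := by rw [ENNReal.ofReal_mul hc0, ENNReal.ofReal_toReal hCtop]
    _ ≤ C * ∑' n : ℕ, ENNReal.ofReal (w n * x n) := by
        refine mul_le_mul_right ?_ C
        rw [hP, ENNReal.ofReal_sum_of_nonneg
          (fun n _ => mul_nonneg (hw n) (hx0 n).le)]
        exact ENNReal.sum_le_tsum _
    _ = C * ∑' n : ℕ, ENNReal.ofReal (w n * x n) := rfl

end M

end Stmt19Aux

/-- For a Jensen-concave weighted mean `M` on `I = (0,a)`, every Hardy constant for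
`M` is a Hardy constant for its lower homogenization `M_#`; consequently the
λ-Hardy constant of `M_#` equals that of `M`. -/
theorem stmt_19 (a : ℝ≥0∞) (ha : 0 < a)
    (I : Set ℝ) (hI : I = {x : ℝ | 0 < x ∧ ENNReal.ofReal x < a})
    (M : ∀ n : ℕ, (Fin (n + 1) → ℝ) → (Fin (n + 1) → ℝ) → ℝ)
    -- mean value property
    (hmean : ∀ (n : ℕ) (x v : Fin (n + 1) → ℝ), (∀ i, x i ∈ I) →
      (∀ i, 0 ≤ v i) → 0 < ∑ i, v i →
      (⨅ i, x i) ≤ M n x v ∧ M n x v ≤ ⨆ i, x i)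
    -- nullhomogeneity in the weights
    (hnull : ∀ (n : ℕ) (x v : Fin (n + 1) → ℝ) (t : ℝ), 0 < t →
      M n x (fun i => t * v i) = M n x v)
    -- Jensen concavity
    (hconc : ∀ (n : ℕ) (x y v : Fin (n + 1) → ℝ), (∀ i, x i ∈ I) → (∀ i, y i ∈ I) →
      (∀ i, 0 ≤ v i) → 0 < ∑ i, v i →
      (M n x v + M n y v) / 2 ≤ M n (fun i => (x i + y i) / 2) v)
    -- lower homogenization
    (Ms : ∀ n : ℕ, (Fin (n + 1) → ℝ) → (Fin (n + 1) → ℝ) → ℝ)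
    (hMs : ∀ (n : ℕ) (x v : Fin (n + 1) → ℝ), Ms n x v =
      Filter.liminf (fun t : ℝ => M n (fun i => t * x i) v / t)
        (nhdsWithin 0 (Set.Ioi 0)))
    -- the weight sequence
    (w : ℕ → ℝ) (hw0 : 0 < w 0) (hw : ∀ n, 0 ≤ w n) :
    (∀ C : ℝ≥0∞,
      (∀ x : ℕ → ℝ, (∀ n, x n ∈ I) →
        (∑' n : ℕ, ENNReal.ofReal (w n *
            M n (fun i => x i.val) (fun i => w i.val))) ≤
          C * ∑' n : ℕ, ENNReal.ofReal (w n * x n)) →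
      (∀ x : ℕ → ℝ, (∀ n, 0 < x n) →
        (∑' n : ℕ, ENNReal.ofReal (w n *
            Ms n (fun i => x i.val) (fun i => w i.val))) ≤
          C * ∑' n : ℕ, ENNReal.ofReal (w n * x n))) ∧
    sInf {C : ℝ≥0∞ | ∀ x : ℕ → ℝ, (∀ n, 0 < x n) →
        (∑' n : ℕ, ENNReal.ofReal (w n *
            Ms n (fun i => x i.val) (fun i => w i.val))) ≤
          C * ∑' n : ℕ, ENNReal.ofReal (w n * x n)} =
      sInf {C : ℝ≥0∞ | ∀ x : ℕ → ℝ, (∀ n, x n ∈ I) →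
        (∑' n : ℕ, ENNReal.ofReal (w n *
            M n (fun i => x i.val) (fun i => w i.val))) ≤
          C * ∑' n : ℕ, ENNReal.ofReal (w n * x n)} := by
  have part1 : ∀ C : ℝ≥0∞,
      (∀ x : ℕ → ℝ, (∀ n, x n ∈ I) →
        (∑' n : ℕ, ENNReal.ofReal (w n *
            M n (fun i => x i.val) (fun i => w i.val))) ≤
          C * ∑' n : ℕ, ENNReal.ofReal (w n * x n)) →
      (∀ x : ℕ → ℝ, (∀ n, 0 < x n) →
        (∑' n : ℕ, ENNReal.ofReal (w n *
            Ms n (fun i => x i.val) (fun i => w i.val))) ≤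
          C * ∑' n : ℕ, ENNReal.ofReal (w n * x n)) :=
    fun C hC x hx0 => Stmt19Aux.key M ha hI hmean Ms hMs w hw0 hw C hC x hx0
  have hwsum : ∀ n : ℕ, 0 < ∑ i : Fin (n+1), w i.val := by
    intro n
    have h := Finset.single_le_sum (f := fun i : Fin (n+1) => w i.val)
      (fun i _ => hw _) (Finset.mem_univ (0 : Fin (n+1)))
    simp only [Fin.val_zero] at h
    linarith
  refine ⟨part1, le_antisymm ?_ ?_⟩
  · exact sInf_le_sInf fun C hC => part1 C hC
  · refine sInf_le_sInf fun C hC => ?_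
    intro x hxI
    have hx0 : ∀ n, 0 < x n := fun n => by rw [hI] at hxI; exact (hxI n).1
    refine le_trans (ENNReal.tsum_le_tsum fun n => ?_) (hC x hx0)
    apply ENNReal.ofReal_le_ofReal
    refine mul_le_mul_of_nonneg_left ?_ (hw n)
    rw [hMs]
    exact Stmt19Aux.M_le_liminf M ha hI hmean hconc (fun i => hw _) (hwsum n)
      (fun i => hxI i.val)
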